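/- Let P be a finite set of points in the Euclidean plane and let q be a point in the interior of the convex hull of P. Then there exists R > 0 such that every closed ball closedBall(c, ρ) containing q whose interior ball(c, ρ) is disjoint from P satisfies ρ ≤ R. -/

import Mathlib

set_option maxHeartbeats 1000000

open Metric Finset

-- variance-type identity bound
lemma key_ineq {E : Type*} [NormedAddCommGroup E] [InnerProductSpace ℝ E]
    (P : Finset E) (w : E → ℝ) (hw0 : ∀ p ∈ P, 0 ≤ w p) (hw1 : ∑ p ∈ P, w p = 1)
    (x c : E) (hx : ∑ p ∈ P, w p • p = x)
    (ρ K : ℝ) (hρ : 0 ≤ ρ) (hK : 0 ≤ K)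
    (hc : ∀ p ∈ P, ρ ≤ ‖p - c‖) (hxK : ∀ p ∈ P, ‖p - x‖ ≤ K) :
    ρ ^ 2 - K ^ 2 ≤ ‖x - c‖ ^ 2 := by
  have hid : ∑ p ∈ P, w p * (‖p - c‖ ^ 2 - ‖p - x‖ ^ 2) = ‖x - c‖ ^ 2 := by
    have h1 : ∀ p : E, ‖p - c‖ ^ 2 - ‖p - x‖ ^ 2
        = 2 * inner ℝ p (x - c) + (‖c‖ ^ 2 - ‖x‖ ^ 2) := by
      intro p
      rw [@norm_sub_sq_real E, @norm_sub_sq_real E, inner_sub_right]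
      ring
    have h2 : ∀ v : E, ∑ p ∈ P, w p * inner ℝ p v = (inner ℝ x v : ℝ) := by
      intro v
      rw [← hx, sum_inner]
      exact Finset.sum_congr rfl fun p _ => (real_inner_smul_left p v (w p)).symm
    calc ∑ p ∈ P, w p * (‖p - c‖ ^ 2 - ‖p - x‖ ^ 2)
        = ∑ p ∈ P, (2 * (w p * inner ℝ p (x - c)) + w p * (‖c‖ ^ 2 - ‖x‖ ^ 2)) := by
          refine Finset.sum_congr rfl fun p _ => ?_
          rw [h1 p]; ring
      _ = 2 * (inner ℝ x (x - c) : ℝ) + (‖c‖ ^ 2 - ‖x‖ ^ 2) := by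
          rw [Finset.sum_add_distrib, ← Finset.mul_sum, h2 (x - c), ← Finset.sum_mul, hw1, one_mul]
      _ = ‖x - c‖ ^ 2 := by
          rw [@norm_sub_sq_real E, inner_sub_right, real_inner_self_eq_norm_sq,
            real_inner_comm]
          ring
  have hlo : ρ ^ 2 - K ^ 2 ≤ ∑ p ∈ P, w p * (‖p - c‖ ^ 2 - ‖p - x‖ ^ 2) := by
    calc ρ ^ 2 - K ^ 2 = ∑ p ∈ P, w p * (ρ ^ 2 - K ^ 2) := by
          rw [← Finset.sum_mul, hw1, one_mul]
      _ ≤ ∑ p ∈ P, w p * (‖p - c‖ ^ 2 - ‖p - x‖ ^ 2) := by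
          refine Finset.sum_le_sum fun p hp => ?_
          have h1 : ρ ^ 2 ≤ ‖p - c‖ ^ 2 := by
            have := hc p hp; nlinarith [norm_nonneg (p - c)]
          have h2 : ‖p - x‖ ^ 2 ≤ K ^ 2 := by
            have := hxK p hp; nlinarith [norm_nonneg (p - x)]
          have := hw0 p hp
          nlinarith
  linarith [hid ▸ hlo]

theorem empty_ball_radius_bounded_inside_hull
    (P : Finset (EuclideanSpace ℝ (Fin 2))) (q : EuclideanSpace ℝ (Fin 2))
    (hq : q ∈ interior (convexHull ℝ (P : Set (EuclideanSpace ℝ (Fin 2))))) :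
    ∃ R : ℝ, 0 < R ∧ ∀ (c : EuclideanSpace ℝ (Fin 2)) (ρ : ℝ),
      q ∈ Metric.closedBall c ρ → (∀ p ∈ P, p ∉ Metric.ball c ρ) → ρ ≤ R := by
  obtain ⟨ε0, hε0, hball⟩ := Metric.isOpen_iff.mp isOpen_interior q hq
  set ε : ℝ := ε0 / 2 with hεdef
  have hε : 0 < ε := by positivity
  have hcb : Metric.closedBall q ε ⊆ convexHull ℝ (P : Set (EuclideanSpace ℝ (Fin 2))) := by
    intro y hy
    exact interior_subset (hball (lt_of_le_of_lt (Metric.mem_closedBall.mp hy) (by linarith)))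
  have hPne : P.Nonempty := by
    rcases P.eq_empty_or_nonempty with h | h
    · exfalso
      have := interior_subset hq
      rw [h] at this
      simp at this
    · exact h
  obtain ⟨p₀, hp₀⟩ := hPne
  have hPne : P.Nonempty := ⟨p₀, hp₀⟩
  set M : ℝ := P.sup' hPne (fun p => dist p q) with hMdef
  have hMle : ∀ p ∈ P, dist p q ≤ M := fun p hp => Finset.le_sup' (fun p => dist p q) hp
  have hM0 : 0 ≤ M := le_trans dist_nonneg (hMle p₀ hp₀)
  set K : ℝ := M + ε with hKdef
  have hK : 0 < K := by positivity
  refine ⟨(K ^ 2 + ε ^ 2) / (2 * ε), by positivity, ?_⟩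
  intro c ρ hqc hemp
  have hd : dist q c ≤ ρ := Metric.mem_closedBall.mp hqc
  have hρ0 : 0 ≤ ρ := le_trans dist_nonneg hd
  have hρdist : ∀ p ∈ P, ρ ≤ ‖p - c‖ := by
    intro p hp
    have := hemp p hp
    rw [Metric.mem_ball, dist_eq_norm] at this
    linarith [not_lt.mp this]
  -- choose a point x in closedBall q ε, at distance ≤ max (dist q c - ε) 0 from c
  have hKR : K ≤ (K ^ 2 + ε ^ 2) / (2 * ε) := by
    rw [le_div_iff₀ (by positivity)]
    nlinarith [sq_nonneg (K - ε)]
  by_cases hcase : dist q c ≤ ε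
  · -- c itself is in the hull
    have hchull : c ∈ convexHull ℝ (P : Set (EuclideanSpace ℝ (Fin 2))) := by
      apply hcb
      rw [Metric.mem_closedBall, dist_comm]
      exact hcase
    rw [Finset.mem_convexHull] at hchull
    obtain ⟨w, hw0, hw1, hwc⟩ := hchull
    rw [Finset.centerMass_eq_of_sum_1 _ _ hw1] at hwc
    simp only [id] at hwc
    have := key_ineq P w hw0 hw1 c c hwc ρ K hρ0 hK.le hρdist
      (fun p hp => by
        have h1 := hMle p hp
        calc ‖p - c‖ = dist p c := (dist_eq_norm p c).symm
          _ ≤ dist p q + dist q c := dist_triangle p q c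
          _ ≤ M + ε := add_le_add h1 hcase)
    simp only [sub_self, norm_zero] at this
    have hρK : ρ ≤ K := by nlinarith
    linarith
  · push_neg at hcase
    set d : ℝ := dist q c with hddef
    set x : EuclideanSpace ℝ (Fin 2) := q + (ε / d) • (c - q) with hxdef
    have hd0 : 0 < d := lt_trans hε hcase
    have hxq : dist x q = ε := by
      rw [hxdef, dist_eq_norm, add_sub_cancel_left, norm_smul]
      rw [Real.norm_eq_abs, abs_of_pos (by positivity)]
      rw [hddef, dist_comm, dist_eq_norm] at *
      field_simp
    have hxc : ‖x - c‖ = d - ε := by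
      have h1 : x - c = (1 - ε / d) • (q - c) := by
        rw [hxdef]
        module
      rw [h1, norm_smul, Real.norm_eq_abs, abs_of_pos]
      · rw [← dist_eq_norm, ← hddef]
        field_simp
      · rw [sub_pos, div_lt_one hd0]; exact hcase
    have hxhull : x ∈ convexHull ℝ (P : Set (EuclideanSpace ℝ (Fin 2))) :=
      hcb (Metric.mem_closedBall.mpr hxq.le)
    rw [Finset.mem_convexHull] at hxhull
    obtain ⟨w, hw0, hw1, hwc⟩ := hxhull
    rw [Finset.centerMass_eq_of_sum_1 _ _ hw1] at hwc
    simp only [id] at hwc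
    have hkey := key_ineq P w hw0 hw1 x c hwc ρ K hρ0 hK.le hρdist
      (fun p hp => by
        have h1 := hMle p hp
        calc ‖p - x‖ = dist p x := (dist_eq_norm p x).symm
          _ ≤ dist p q + dist q x := dist_triangle p q x
          _ ≤ M + ε := add_le_add h1 (by rw [dist_comm]; exact hxq.le))
    rw [hxc] at hkey
    have hdρ : d - ε ≤ ρ - ε := by linarith
    have h2 : (d - ε) ^ 2 ≤ (ρ - ε) ^ 2 := by nlinarith
    rw [le_div_iff₀ (by positivity)]
    nlinarith
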